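/- For a Hermiticity-preserving, trace-preserving linear map L on M_d(ℂ), the contraction coefficient satisfies τ(L) = (1/2)·sup over pairs of orthonormal vectors φ ⊥ ψ in ℂ^d of ‖L(|φ⟩⟨φ|) − L(|ψ⟩⟨ψ|)‖₁. -/

import Mathlib

open Matrix Filter
open scoped ComplexOrder

/-- Trace norm (Schatten 1-norm) of a complex matrix: `tr √(XᴴX)`. -/
noncomputable def traceNorm {d : ℕ} (X : Matrix (Fin d) (Fin d) ℂ) : ℝ :=
  (((Matrix.posSemidef_conjTranspose_mul_self X).1.eigenvectorUnitary : Matrix (Fin d) (Fin d) ℂ) *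
    Matrix.diagonal ((fun x : ℝ => ((Real.sqrt x : ℝ) : ℂ)) ∘ (Matrix.posSemidef_conjTranspose_mul_self X).1.eigenvalues) *
    (star (Matrix.posSemidef_conjTranspose_mul_self X).1.eigenvectorUnitary : Matrix (Fin d) (Fin d) ℂ)).trace.re

/-- Linear endomorphisms of `M_d(ℂ)` (superoperators). -/
abbrev MatEnd (d : ℕ) := Module.End ℂ (Matrix (Fin d) (Fin d) ℂ)

/-- Trace-preserving map. -/
def IsTP {d : ℕ} (T : MatEnd d) : Prop := ∀ X, (T X).trace = X.trace

/-- Positive map: maps PSD matrices to PSD matrices. -/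
def IsPos {d : ℕ} (T : MatEnd d) : Prop := ∀ X, X.PosSemidef → (T X).PosSemidef

/-- Hermiticity-preserving map. -/
def IsHP {d : ℕ} (T : MatEnd d) : Prop := ∀ X, (T X)ᴴ = T Xᴴ

/-- Induced 1→1 norm: `sup_{X ≠ 0} ‖T X‖₁ / ‖X‖₁`. -/
noncomputable def norm1to1 {d : ℕ} (T : MatEnd d) : ℝ :=
  sSup {r | ∃ X, X ≠ 0 ∧ r = traceNorm (T X) / traceNorm X}

/-- Trace-norm contraction coefficient: sup over nonzero Hermitian traceless `σ`. -/
noncomputable def tau {d : ℕ} (T : MatEnd d) : ℝ :=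
  sSup {r | ∃ σ : Matrix (Fin d) (Fin d) ℂ,
    σ.IsHermitian ∧ σ.trace = 0 ∧ σ ≠ 0 ∧ r = traceNorm (T σ) / traceNorm σ}

/-- Density matrix: positive semidefinite with unit trace. -/
def IsDensity {d : ℕ} (ρ : Matrix (Fin d) (Fin d) ℂ) : Prop := ρ.PosSemidef ∧ ρ.trace = 1

/-- `Tinf` is the Cesàro-mean fixed point projection of `T`. -/
def IsCesaroProj {d : ℕ} (T Tinf : MatEnd d) : Prop :=
  ∀ X, Tendsto (fun n : ℕ => (n : ℂ)⁻¹ • ∑ k ∈ Finset.range n, (T ^ (k + 1)) X)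
    atTop (nhds (Tinf X))

variable {d : ℕ}

/-- The PSD square root of `XᴴX`, as it appears inside `traceNorm`. -/
noncomputable def sqrtM (X : Matrix (Fin d) (Fin d) ℂ) : Matrix (Fin d) (Fin d) ℂ :=
  ((Matrix.posSemidef_conjTranspose_mul_self X).1.eigenvectorUnitary : Matrix (Fin d) (Fin d) ℂ) *
    Matrix.diagonal ((fun x : ℝ => ((Real.sqrt x : ℝ) : ℂ)) ∘ (Matrix.posSemidef_conjTranspose_mul_self X).1.eigenvalues) *
    (star (Matrix.posSemidef_conjTranspose_mul_self X).1.eigenvectorUnitary : Matrix (Fin d) (Fin d) ℂ)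

lemma traceNorm_eq (X : Matrix (Fin d) (Fin d) ℂ) : traceNorm X = (sqrtM X).trace.re := rfl

section sqrtSec
open scoped MatrixOrder

lemma sqrtM_eq_cfc (X : Matrix (Fin d) (Fin d) ℂ) : sqrtM X = CFC.sqrt (Xᴴ * X) := by
  have h0 : (0 : Matrix (Fin d) (Fin d) ℂ) ≤ Xᴴ * X :=
    Matrix.nonneg_iff_posSemidef.mpr (Matrix.posSemidef_conjTranspose_mul_self X)
  rw [CFC.sqrt_eq_cfc, cfc_nnreal_eq_real _ (Xᴴ * X),
    (Matrix.posSemidef_conjTranspose_mul_self X).1.cfc_eq, Matrix.IsHermitian.cfc,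
    Unitary.conjStarAlgAut_apply]
  unfold sqrtM Real.sqrt
  rfl

lemma sqrtM_psd (X : Matrix (Fin d) (Fin d) ℂ) : (sqrtM X).PosSemidef := by
  rw [sqrtM_eq_cfc]
  exact Matrix.nonneg_iff_posSemidef.mp (CFC.sqrt_nonneg _)

lemma sq_sqrtM (X : Matrix (Fin d) (Fin d) ℂ) : sqrtM X ^ 2 = Xᴴ * X := by
  rw [sqrtM_eq_cfc]
  exact CFC.sq_sqrt _ (Matrix.nonneg_iff_posSemidef.mpr (Matrix.posSemidef_conjTranspose_mul_self X))

lemma eq_sqrtM_of_sq_eq {A X : Matrix (Fin d) (Fin d) ℂ} (hA : A.PosSemidef)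
    (h : A ^ 2 = Xᴴ * X) : A = sqrtM X := by
  rw [sqrtM_eq_cfc]
  exact (CFC.sqrt_unique (by rw [← sq]; exact h) (Matrix.nonneg_iff_posSemidef.mpr hA)).symm

end sqrtSec

lemma conj_diag_eq_sum (U : Matrix (Fin d) (Fin d) ℂ) (f : Fin d → ℂ) :
    U * diagonal f * Uᴴ = ∑ i, f i • vecMulVec (fun a => U a i) (star fun a => U a i) := by
  ext a b
  simp only [mul_apply, diagonal_apply, Finset.sum_apply, Matrix.sum_apply, Pi.smul_apply,
    smul_eq_mul, vecMulVec_apply, Pi.star_apply, conjTranspose_apply]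
  refine Finset.sum_congr rfl fun j _ => ?_
  simp only [Finset.sum_mul, Finset.mul_sum]
  rw [Finset.sum_eq_single j (by intro k _ hk; simp [hk]) (by simp)]
  simp [Matrix.vecMulVec_apply]; ring

lemma trace_conj_diag (U : Matrix (Fin d) (Fin d) ℂ) (hU : Uᴴ * U = 1) (f : Fin d → ℂ) :
    (U * diagonal f * Uᴴ).trace = ∑ i, f i := by
  rw [trace_mul_cycle, hU, Matrix.one_mul, trace_diagonal]

section herm
variable {H : Matrix (Fin d) (Fin d) ℂ} (hH : H.IsHermitian)

lemma unitary_conjT_mul (U : unitary (Matrix (Fin d) (Fin d) ℂ)) :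
    (U : Matrix (Fin d) (Fin d) ℂ)ᴴ * U = 1 := by
  rw [← star_eq_conjTranspose]; exact Unitary.coe_star_mul_self U

lemma unitary_mul_conjT (U : unitary (Matrix (Fin d) (Fin d) ℂ)) :
    (U : Matrix (Fin d) (Fin d) ℂ) * (U : Matrix (Fin d) (Fin d) ℂ)ᴴ = 1 := by
  rw [← star_eq_conjTranspose]; exact Unitary.coe_mul_star_self U

lemma spectral_decomp :
    H = ∑ i, (hH.eigenvalues i : ℂ) •
      vecMulVec (fun a => (hH.eigenvectorUnitary : Matrix (Fin d) (Fin d) ℂ) a i)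
        (star fun a => (hH.eigenvectorUnitary : Matrix (Fin d) (Fin d) ℂ) a i) := by
  conv_lhs => rw [hH.spectral_theorem, Unitary.conjStarAlgAut_apply]
  rw [star_eq_conjTranspose, conj_diag_eq_sum]
  rfl

lemma conj_diag_mul (U : Matrix (Fin d) (Fin d) ℂ) (hU1 : Uᴴ * U = 1) (f g : Fin d → ℂ) :
    (U * diagonal f * Uᴴ) * (U * diagonal g * Uᴴ) = U * diagonal (fun i => f i * g i) * Uᴴ := by
  have h : Uᴴ * (U * diagonal g * Uᴴ) = diagonal g * Uᴴ := by
    rw [← Matrix.mul_assoc, ← Matrix.mul_assoc, hU1, Matrix.one_mul]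
  rw [Matrix.mul_assoc (U * diagonal f), h, ← Matrix.mul_assoc, Matrix.mul_assoc U,
    diagonal_mul_diagonal]

lemma traceNorm_of_hermitian : traceNorm H = ∑ i, |hH.eigenvalues i| := by
  set U := (hH.eigenvectorUnitary : Matrix (Fin d) (Fin d) ℂ) with hUdef
  have hU1 : Uᴴ * U = 1 := unitary_conjT_mul _
  set A := U * diagonal (fun i => ((|hH.eigenvalues i| : ℝ) : ℂ)) * Uᴴ with hA
  have hApsd : A.PosSemidef := by
    refine Matrix.PosSemidef.mul_mul_conjTranspose_same ?_ U
    exact Matrix.posSemidef_diagonal_iff.mpr fun i => Complex.zero_le_real.mpr (abs_nonneg _)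
  have hsq : A ^ 2 = Hᴴ * H := by
    rw [show Hᴴ = H from hH]
    conv_rhs => rw [hH.spectral_theorem, Unitary.conjStarAlgAut_apply]
    rw [star_eq_conjTranspose, pow_two, hA, conj_diag_mul U hU1, conj_diag_mul U hU1]
    have hfun : (fun i => ((|hH.eigenvalues i| : ℝ) : ℂ) * ((|hH.eigenvalues i| : ℝ) : ℂ))
        = (fun i => (RCLike.ofReal ∘ hH.eigenvalues) i * (RCLike.ofReal ∘ hH.eigenvalues) i) := by
      funext i
      simp only [Function.comp_apply]
      rw [← Complex.ofReal_mul, abs_mul_abs_self]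
      norm_cast
    rw [hfun]
  have hAs : A = sqrtM H :=
    eq_sqrtM_of_sq_eq hApsd hsq
  rw [traceNorm_eq, ← hAs, hA, trace_conj_diag U hU1]
  rw [← Complex.ofReal_sum]
  simp
end herm

lemma traceNorm_zero : traceNorm (0 : Matrix (Fin d) (Fin d) ℂ) = 0 := by
  have h0 : (0 : Matrix (Fin d) (Fin d) ℂ).PosSemidef := Matrix.PosSemidef.zero
  have h : (0 : Matrix (Fin d) (Fin d) ℂ)
      = sqrtM (0 : Matrix (Fin d) (Fin d) ℂ) :=
    eq_sqrtM_of_sq_eq h0 (by simp)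
  rw [traceNorm_eq, ← h]; simp

lemma traceNorm_nonneg_of_hermitian {H : Matrix (Fin d) (Fin d) ℂ} (hH : H.IsHermitian) :
    0 ≤ traceNorm H := by
  rw [traceNorm_of_hermitian hH]
  exact Finset.sum_nonneg fun i _ => abs_nonneg _

lemma traceNorm_smul_real (c : ℝ) (X : Matrix (Fin d) (Fin d) ℂ) :
    traceNorm ((c : ℂ) • X) = |c| * traceNorm X := by
  set Q := sqrtM X with hQ
  have hQpsd : Q.PosSemidef := sqrtM_psd X
  set A := ((|c| : ℝ) : ℂ) • Q with hA
  have hApsd : A.PosSemidef := by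
    refine Matrix.PosSemidef.of_dotProduct_mulVec_nonneg ?_ fun x => ?_
    · show ((((|c| : ℝ) : ℂ)) • Q)ᴴ = _
      rw [conjTranspose_smul, hQpsd.1]
      congr 1
      simp
    · rw [hA, smul_mulVec, dotProduct_smul, smul_eq_mul]
      exact mul_nonneg (Complex.zero_le_real.mpr (abs_nonneg _)) (hQpsd.dotProduct_mulVec_nonneg x)
  have hsq : A ^ 2 = ((c : ℂ) • X)ᴴ * ((c : ℂ) • X) := by
    rw [conjTranspose_smul, Matrix.smul_mul, Matrix.mul_smul, hA]
    rw [smul_pow, smul_smul, sq_sqrtM X]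
    congr 1
    rw [Complex.star_def, Complex.conj_ofReal]
    norm_cast
    rw [sq_abs, sq]
  have hAs : A = sqrtM ((c : ℂ) • X) :=
    eq_sqrtM_of_sq_eq hApsd hsq
  rw [traceNorm_eq, ← hAs, hA, trace_smul, smul_eq_mul, Complex.re_ofReal_mul, traceNorm_eq]

/-- Duality upper bound: `Re tr(S K) ≤ ‖K‖₁` for `S = V diag(s) Vᴴ` a Hermitian contraction. -/
lemma re_trace_contraction_mul_le
    (V : Matrix (Fin d) (Fin d) ℂ) (hV2 : V * Vᴴ = 1)
    (s : Fin d → ℝ) (hs : ∀ i, |s i| ≤ 1)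
    {K : Matrix (Fin d) (Fin d) ℂ} (hK : K.IsHermitian) :
    ((V * diagonal (fun i => (s i : ℂ)) * Vᴴ * K).trace).re ≤ traceNorm K := by
  set W := (hK.eigenvectorUnitary : Matrix (Fin d) (Fin d) ℂ) with hW
  have hW1 : Wᴴ * W = 1 := unitary_conjT_mul _
  set μ := hK.eigenvalues with hμ
  set S := V * diagonal (fun i => (s i : ℂ)) * Vᴴ with hS
  set M := Vᴴ * W with hM
  have hMcol : ∀ k, ∑ i, Complex.normSq (M i k) = 1 := by
    intro k
    have h1 : Mᴴ * M = 1 := by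
      rw [hM, conjTranspose_mul, conjTranspose_conjTranspose, Matrix.mul_assoc,
        ← Matrix.mul_assoc V, hV2, Matrix.one_mul, hW1]
    have h2 := congrArg (fun N => N k k) h1
    simp only [mul_apply, conjTranspose_apply, Matrix.one_apply_eq] at h2
    have h3 : (((∑ i, Complex.normSq (M i k)) : ℝ) : ℂ) = 1 := by
      rw [Complex.ofReal_sum, ← h2]
      refine Finset.sum_congr rfl fun i _ => ?_
      rw [mul_comm]
      exact (Complex.mul_conj _).symm
    exact_mod_cast h3
  -- trace computation
  have htr : (S * K).trace = ∑ k, (∑ i, (s i : ℂ) * ((Complex.normSq (M i k) : ℝ) : ℂ)) * (μ k : ℂ) := by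
    conv_lhs => rw [hK.spectral_theorem, Unitary.conjStarAlgAut_apply, star_eq_conjTranspose, ← hW]
    rw [show S * (W * diagonal (RCLike.ofReal ∘ μ) * Wᴴ)
        = S * W * diagonal (RCLike.ofReal ∘ μ) * Wᴴ by
      simp only [Matrix.mul_assoc]]
    rw [trace_mul_cycle]
    rw [show Wᴴ * (S * W) * diagonal (RCLike.ofReal ∘ μ)
        = (Mᴴ * diagonal (fun i => (s i : ℂ)) * M) * diagonal (RCLike.ofReal ∘ μ) by
      rw [hM, hS, conjTranspose_mul, conjTranspose_conjTranspose]
      simp only [Matrix.mul_assoc]]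
    rw [Matrix.trace]
    refine Finset.sum_congr rfl fun k _ => ?_
    rw [diag_apply, mul_diagonal]
    congr 1
    · rw [mul_apply]
      refine Finset.sum_congr rfl fun i _ => ?_
      rw [mul_apply]
      rw [Finset.sum_eq_single i (fun b _ hb => by rw [diagonal_apply_ne _ hb, mul_zero])
        (by simp), diagonal_apply_eq, conjTranspose_apply, Complex.normSq_eq_conj_mul_self,
        Complex.star_def]
      ring
  have hre : ((S * K).trace).re = ∑ k, (∑ i, s i * Complex.normSq (M i k)) * μ k := by
    rw [htr]
    have : (∑ k, (∑ i, (s i : ℂ) * ((Complex.normSq (M i k) : ℝ) : ℂ)) * (μ k : ℂ))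
        = (((∑ k, (∑ i, s i * Complex.normSq (M i k)) * μ k : ℝ)) : ℂ) := by
      push_cast; ring
    rw [this, Complex.ofReal_re]
  rw [hre, traceNorm_of_hermitian hK]
  refine Finset.sum_le_sum fun k _ => ?_
  calc (∑ i, s i * Complex.normSq (M i k)) * μ k
      ≤ |(∑ i, s i * Complex.normSq (M i k)) * μ k| := le_abs_self _
    _ ≤ 1 * |μ k| := by
        rw [abs_mul]
        refine mul_le_mul_of_nonneg_right ?_ (abs_nonneg _)
        calc |∑ i, s i * Complex.normSq (M i k)| ≤ ∑ i, |s i * Complex.normSq (M i k)| :=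
              Finset.abs_sum_le_sum_abs _ _
          _ ≤ ∑ i, 1 * Complex.normSq (M i k) := by
              refine Finset.sum_le_sum fun i _ => ?_
              rw [abs_mul, abs_of_nonneg (Complex.normSq_nonneg _)]
              exact mul_le_mul_of_nonneg_right (hs i) (Complex.normSq_nonneg _)
          _ = 1 := by rw [← Finset.mul_sum, hMcol k, mul_one]
    _ = |μ k| := one_mul _

/-- The sign matrix achieves the trace norm. -/
lemma exists_sign_matrix {H : Matrix (Fin d) (Fin d) ℂ} (hH : H.IsHermitian) :
    ∃ (V : Matrix (Fin d) (Fin d) ℂ) (s : Fin d → ℝ), V * Vᴴ = 1 ∧ (∀ i, |s i| ≤ 1) ∧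
      ((V * diagonal (fun i => (s i : ℂ)) * Vᴴ * H).trace).re = traceNorm H := by
  refine ⟨(hH.eigenvectorUnitary : Matrix (Fin d) (Fin d) ℂ),
    fun i => if hH.eigenvalues i < 0 then (-1 : ℝ) else 1, unitary_mul_conjT _, ?_, ?_⟩
  · intro i; by_cases hi : hH.eigenvalues i < 0 <;> simp [hi]
  set U := (hH.eigenvectorUnitary : Matrix (Fin d) (Fin d) ℂ)
  have hU1 : Uᴴ * U = 1 := unitary_conjT_mul _
  have h : (U * diagonal (fun i =>
        (((if hH.eigenvalues i < 0 then (-1 : ℝ) else 1) : ℝ) : ℂ)) * Uᴴ) * H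
      = U * diagonal (fun i =>
        (((if hH.eigenvalues i < 0 then (-1 : ℝ) else 1) : ℝ) : ℂ) * (hH.eigenvalues i : ℂ))
        * Uᴴ := by
    have e1 : (U * diagonal (fun i =>
          (((if hH.eigenvalues i < 0 then (-1 : ℝ) else 1) : ℝ) : ℂ)) * Uᴴ) * H
        = (U * diagonal (fun i =>
          (((if hH.eigenvalues i < 0 then (-1 : ℝ) else 1) : ℝ) : ℂ)) * Uᴴ)
          * (U * diagonal (RCLike.ofReal ∘ hH.eigenvalues) * Uᴴ) := by
      congr 1
      rw [← star_eq_conjTranspose]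
      exact hH.spectral_theorem.trans (Unitary.conjStarAlgAut_apply _ _)
    rw [e1, conj_diag_mul U hU1]
    rfl
  have h2 : ((U * diagonal (fun i =>
        (((if hH.eigenvalues i < 0 then (-1 : ℝ) else 1) : ℝ) : ℂ)) * Uᴴ) * H).trace
      = ∑ i, (((if hH.eigenvalues i < 0 then (-1 : ℝ) else 1) : ℝ) : ℂ) * (hH.eigenvalues i : ℂ) := by
    have := congrArg Matrix.trace h
    rw [trace_conj_diag U hU1] at this
    exact this
  rw [h2, traceNorm_of_hermitian hH]
  have h3 : (∑ i, (((if hH.eigenvalues i < 0 then (-1 : ℝ) else 1) : ℝ) : ℂ) * (hH.eigenvalues i : ℂ))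
      = ((∑ i, |hH.eigenvalues i| : ℝ) : ℂ) := by
    rw [Complex.ofReal_sum]
    refine Finset.sum_congr rfl fun i _ => ?_
    by_cases hi : hH.eigenvalues i < 0
    · simp [hi, abs_of_neg hi]
    · simp [hi, abs_of_nonneg (not_lt.mp hi)]
  rw [h3, Complex.ofReal_re]

lemma traceNorm_add_le {A B : Matrix (Fin d) (Fin d) ℂ}
    (hA : A.IsHermitian) (hB : B.IsHermitian) :
    traceNorm (A + B) ≤ traceNorm A + traceNorm B := by
  obtain ⟨V, s, hV, hs, htr⟩ := exists_sign_matrix (hA.add hB)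
  set S := V * diagonal (fun i => (s i : ℂ)) * Vᴴ with hS
  have h2 : ((S * A).trace).re ≤ traceNorm A := re_trace_contraction_mul_le V hV s hs hA
  have h3 : ((S * B).trace).re ≤ traceNorm B := re_trace_contraction_mul_le V hV s hs hB
  have h4 : ((S * (A + B)).trace).re = ((S * A).trace).re + ((S * B).trace).re := by
    rw [Matrix.mul_add, trace_add, Complex.add_re]
  rw [← htr, h4]
  exact add_le_add h2 h3

lemma isHermitian_sum {ι : Type*} (t : Finset ι) (f : ι → Matrix (Fin d) (Fin d) ℂ)
    (hf : ∀ i ∈ t, (f i).IsHermitian) : (∑ i ∈ t, f i).IsHermitian := by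
  show (∑ i ∈ t, f i)ᴴ = _
  rw [conjTranspose_sum]
  exact Finset.sum_congr rfl hf

lemma traceNorm_sum_le {ι : Type*} (t : Finset ι) (f : ι → Matrix (Fin d) (Fin d) ℂ)
    (hf : ∀ i ∈ t, (f i).IsHermitian) :
    traceNorm (∑ i ∈ t, f i) ≤ ∑ i ∈ t, traceNorm (f i) := by
  classical
  induction t using Finset.induction_on with
  | empty => simp [traceNorm_zero]
  | insert a s hx ih =>
    rw [Finset.sum_insert hx, Finset.sum_insert hx]
    calc traceNorm (f a + ∑ i ∈ s, f i) ≤ traceNorm (f a) + traceNorm (∑ i ∈ s, f i) :=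
          traceNorm_add_le (hf a (Finset.mem_insert_self a s))
            (isHermitian_sum s f fun i hi => hf i (Finset.mem_insert_of_mem hi))
      _ ≤ traceNorm (f a) + ∑ i ∈ s, traceNorm (f i) := by
          have := ih fun i hi => hf i (Finset.mem_insert_of_mem hi)
          linarith

lemma unitary_entry_abs_le {U : Matrix (Fin d) (Fin d) ℂ} (hU2 : U * Uᴴ = 1) (k i : Fin d) :
    ‖U k i‖ ≤ 1 := by
  have h2 := congrArg (fun N => N k k) hU2
  simp only [mul_apply, conjTranspose_apply, Matrix.one_apply_eq] at h2
  have h3 : (∑ j, Complex.normSq (U k j)) = 1 := by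
    have h4 : (((∑ j, Complex.normSq (U k j)) : ℝ) : ℂ) = 1 := by
      rw [Complex.ofReal_sum, ← h2]
      exact Finset.sum_congr rfl fun j _ => (Complex.mul_conj _).symm
    exact_mod_cast h4
  have h5 : Complex.normSq (U k i) ≤ 1 := by
    rw [← h3]
    exact Finset.single_le_sum (fun j _ => Complex.normSq_nonneg _) (Finset.mem_univ i)
  have h6 : ‖U k i‖ ^ 2 ≤ 1 := by rw [Complex.sq_norm]; exact h5
  nlinarith [norm_nonneg (U k i)]

lemma abs_entry_le_traceNorm {H : Matrix (Fin d) (Fin d) ℂ} (hH : H.IsHermitian) (k l : Fin d) :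
    ‖H k l‖ ≤ traceNorm H := by
  set U := (hH.eigenvectorUnitary : Matrix (Fin d) (Fin d) ℂ) with hU
  have hU2 : U * Uᴴ = 1 := unitary_mul_conjT _
  have hdec := spectral_decomp hH
  have hentry : H k l = ∑ i, (hH.eigenvalues i : ℂ) * (U k i * star (U l i)) := by
    conv_lhs => rw [hdec]
    simp [Matrix.sum_apply, vecMulVec_apply, Matrix.IsHermitian.eigenvectorUnitary_apply, hU]
  rw [traceNorm_of_hermitian hH, hentry]
  calc ‖∑ i, (hH.eigenvalues i : ℂ) * (U k i * star (U l i))‖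
      ≤ ∑ i, ‖(hH.eigenvalues i : ℂ) * (U k i * star (U l i))‖ :=
        norm_sum_le _ _
    _ ≤ ∑ i, |hH.eigenvalues i| := by
        refine Finset.sum_le_sum fun i _ => ?_
        rw [norm_mul, norm_mul, Complex.norm_real]
        have h1 : ‖U k i‖ ≤ 1 := unitary_entry_abs_le hU2 k i
        have h2 : ‖star (U l i)‖ ≤ 1 := by
          rw [show (star (U l i)) = (starRingEnd ℂ) (U l i) from rfl, Complex.norm_conj]
          exact unitary_entry_abs_le hU2 l i
        have h3 : ‖U k i‖ * ‖star (U l i)‖ ≤ 1 :=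
          mul_le_one₀ h1 (norm_nonneg _) h2
        calc |hH.eigenvalues i| * (‖U k i‖ * ‖star (U l i)‖)
            ≤ |hH.eigenvalues i| * 1 := mul_le_mul_of_nonneg_left h3 (abs_nonneg _)
          _ = |hH.eigenvalues i| := mul_one _

lemma traceNorm_le_card_mul_entries {H : Matrix (Fin d) (Fin d) ℂ} (hH : H.IsHermitian) :
    traceNorm H ≤ (d : ℝ) * ∑ a, ∑ b, ‖H a b‖ := by
  set U := (hH.eigenvectorUnitary : Matrix (Fin d) (Fin d) ℂ) with hU
  have hU1 : Uᴴ * U = 1 := unitary_conjT_mul _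
  set c := ∑ a, ∑ b, ‖H a b‖ with hc
  have hc0 : 0 ≤ c := Finset.sum_nonneg fun a _ =>
    Finset.sum_nonneg fun b _ => norm_nonneg _
  -- tr (H * H) two ways
  have e1 : (H * H).trace = ((∑ i, hH.eigenvalues i ^ 2 : ℝ) : ℂ) := by
    have h : H * H = U * diagonal (fun i => (RCLike.ofReal ∘ hH.eigenvalues) i
        * (RCLike.ofReal ∘ hH.eigenvalues) i) * Uᴴ := by
      conv_lhs => rw [hH.spectral_theorem, Unitary.conjStarAlgAut_apply, star_eq_conjTranspose, ← hU]
      exact conj_diag_mul U hU1 _ _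
    rw [h, trace_conj_diag U hU1, Complex.ofReal_sum]
    refine Finset.sum_congr rfl fun i _ => ?_
    simp only [Function.comp_apply]
    push_cast
    ring_nf
    rfl
  have e2 : (H * H).trace = ((∑ a, ∑ b, Complex.normSq (H a b) : ℝ) : ℂ) := by
    rw [Matrix.trace]
    push_cast
    refine Finset.sum_congr rfl fun a _ => ?_
    rw [diag_apply, mul_apply]
    refine Finset.sum_congr rfl fun b _ => ?_
    have hba : H b a = star (H a b) := by
      conv_lhs => rw [← hH]
      rfl
    rw [hba]
    exact Complex.mul_conj _
  have e3 : (∑ i, hH.eigenvalues i ^ 2) = ∑ a, ∑ b, Complex.normSq (H a b) := by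
    have := e1.symm.trans e2
    exact_mod_cast this
  have hev : ∀ i, |hH.eigenvalues i| ≤ c := by
    intro i
    have h1 : hH.eigenvalues i ^ 2 ≤ c ^ 2 := by
      calc hH.eigenvalues i ^ 2 ≤ ∑ j, hH.eigenvalues j ^ 2 :=
            Finset.single_le_sum (f := fun j => hH.eigenvalues j ^ 2)
              (fun j _ => sq_nonneg _) (Finset.mem_univ i)
        _ = ∑ a, ∑ b, Complex.normSq (H a b) := e3
        _ ≤ c ^ 2 := by
            rw [hc]
            have : ∀ a, ∑ b, Complex.normSq (H a b) ≤ (∑ b, ‖H a b‖) ^ 2 := by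
              intro a
              have := Finset.sum_sq_le_sq_sum_of_nonneg
                (f := fun b => ‖H a b‖) (s := Finset.univ)
                (fun b _ => norm_nonneg _)
              simpa [Complex.sq_norm] using this
            calc ∑ a, ∑ b, Complex.normSq (H a b)
                ≤ ∑ a, (∑ b, ‖H a b‖) ^ 2 :=
                  Finset.sum_le_sum fun a _ => this a
              _ ≤ (∑ a, ∑ b, ‖H a b‖) ^ 2 :=
                  Finset.sum_sq_le_sq_sum_of_nonneg fun a _ =>
                    Finset.sum_nonneg fun b _ => norm_nonneg _
    calc |hH.eigenvalues i| = Real.sqrt (hH.eigenvalues i ^ 2) := (Real.sqrt_sq_eq_abs _).symm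
      _ ≤ Real.sqrt (c ^ 2) := Real.sqrt_le_sqrt h1
      _ = |c| := Real.sqrt_sq_eq_abs c
      _ = c := abs_of_nonneg hc0
  rw [traceNorm_of_hermitian hH]
  calc ∑ i, |hH.eigenvalues i| ≤ ∑ _i : Fin d, c := Finset.sum_le_sum fun i _ => hev i
    _ = (d : ℝ) * c := by simp [mul_comm]

lemma traceNorm_pos {H : Matrix (Fin d) (Fin d) ℂ} (hH : H.IsHermitian) (hne : H ≠ 0) :
    0 < traceNorm H := by
  rcases lt_or_eq_of_le (traceNorm_nonneg_of_hermitian hH) with h | h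
  · exact h
  exfalso
  apply hne
  have hall : ∀ i, hH.eigenvalues i = 0 := by
    intro i
    have h0 : ∑ i, |hH.eigenvalues i| = 0 := by rw [← traceNorm_of_hermitian hH, ← h]
    have := (Finset.sum_eq_zero_iff_of_nonneg (fun j _ => abs_nonneg _)).mp h0 i
      (Finset.mem_univ i)
    exact abs_eq_zero.mp this
  rw [spectral_decomp hH]
  refine Finset.sum_eq_zero fun i _ => ?_
  rw [hall i]
  simp

lemma vecMulVec_isHermitian (φ : Fin d → ℂ) : (vecMulVec φ (star φ)).IsHermitian := by
  show (vecMulVec φ (star φ))ᴴ = _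
  ext a b
  simp only [conjTranspose_apply, vecMulVec_apply, Pi.star_apply, star_mul', star_star]
  ring

lemma vecMulVec_trace (φ : Fin d → ℂ) :
    (vecMulVec φ (star φ)).trace = ∑ i, star (φ i) * φ i := by
  rw [Matrix.trace]
  refine Finset.sum_congr rfl fun i _ => ?_
  rw [diag_apply, vecMulVec_apply, Pi.star_apply, mul_comm]

lemma vecMulVec_mul_vecMulVec (u v w x : Fin d → ℂ) :
    vecMulVec u v * vecMulVec w x = (∑ k, v k * w k) • vecMulVec u x := by
  ext a b
  simp only [mul_apply, vecMulVec_apply, Matrix.smul_apply, smul_eq_mul, Finset.sum_mul,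
    Finset.mul_sum]
  refine Finset.sum_congr rfl fun k _ => ?_
  ring

lemma vecMulVec_posSemidef (φ : Fin d → ℂ) : (vecMulVec φ (star φ)).PosSemidef := by
  refine Matrix.PosSemidef.of_dotProduct_mulVec_nonneg (vecMulVec_isHermitian φ) fun x => ?_
  have h : star x ⬝ᵥ (vecMulVec φ (star φ)) *ᵥ x
      = star (∑ i, star (φ i) * x i) * (∑ i, star (φ i) * x i) := by
    simp only [dotProduct, mulVec, vecMulVec_apply, Pi.star_apply, star_sum, star_mul',
      star_star, Finset.sum_mul, Finset.mul_sum, dotProduct]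
    rw [Finset.sum_comm]
    refine Finset.sum_congr rfl fun a _ => ?_
    refine Finset.sum_congr rfl fun b _ => ?_
    ring
  rw [h]
  exact star_mul_self_nonneg _

lemma traceNorm_proj_sub {φ ψ : Fin d → ℂ}
    (hφ : (∑ i, star (φ i) * φ i) = 1) (hψ : (∑ i, star (ψ i) * ψ i) = 1)
    (horth : (∑ i, star (φ i) * ψ i) = 0) :
    traceNorm (vecMulVec φ (star φ) - vecMulVec ψ (star ψ)) = 2 := by
  set P := vecMulVec φ (star φ) with hP
  set Q := vecMulVec ψ (star ψ) with hQ
  have horth' : (∑ i, star (ψ i) * φ i) = 0 := by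
    have : (∑ i, star (ψ i) * φ i) = star (∑ i, star (φ i) * ψ i) := by
      rw [star_sum]
      exact Finset.sum_congr rfl fun i _ => by rw [star_mul', star_star]; ring
    rw [this, horth, star_zero]
  have hPP : P * P = P := by
    rw [hP, vecMulVec_mul_vecMulVec]
    have : (∑ k, star (φ k) * φ k) = 1 := hφ
    rw [show (∑ k, (star φ) k * φ k) = (1 : ℂ) from this, one_smul]
  have hQQ : Q * Q = Q := by
    rw [hQ, vecMulVec_mul_vecMulVec]
    rw [show (∑ k, (star ψ) k * ψ k) = (1 : ℂ) from hψ, one_smul]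
  have hPQ : P * Q = 0 := by
    rw [hP, hQ, vecMulVec_mul_vecMulVec]
    rw [show (∑ k, (star φ) k * ψ k) = (0 : ℂ) from horth, zero_smul]
  have hQP : Q * P = 0 := by
    rw [hQ, hP, vecMulVec_mul_vecMulVec]
    rw [show (∑ k, (star ψ) k * φ k) = (0 : ℂ) from horth', zero_smul]
  have hA : (P + Q).PosSemidef := (vecMulVec_posSemidef φ).add (vecMulVec_posSemidef ψ)
  have hherm : (P - Q)ᴴ = P - Q := by
    rw [conjTranspose_sub, (vecMulVec_isHermitian φ), (vecMulVec_isHermitian ψ)]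
  have hsq : (P + Q) ^ 2 = (P - Q)ᴴ * (P - Q) := by
    rw [hherm, pow_two]
    rw [Matrix.add_mul, Matrix.mul_add, Matrix.mul_add, Matrix.sub_mul, Matrix.mul_sub,
      Matrix.mul_sub, hPP, hQQ, hPQ, hQP]
    noncomm_ring
  have hAs : P + Q = sqrtM (P - Q) :=
    eq_sqrtM_of_sq_eq hA hsq
  rw [traceNorm_eq, ← hAs, trace_add, hP, hQ, vecMulVec_trace, vecMulVec_trace, hφ, hψ]
  norm_num

lemma isHermitian_smul_real {H : Matrix (Fin d) (Fin d) ℂ} (hH : H.IsHermitian) (c : ℝ) :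
    ((c : ℂ) • H).IsHermitian := by
  show ((c : ℂ) • H)ᴴ = _
  rw [conjTranspose_smul, hH]
  congr 1
  simp

lemma exists_L_bound (L : MatEnd d) :
    ∃ C : ℝ, 0 ≤ C ∧ ∀ X : Matrix (Fin d) (Fin d) ℂ, X.IsHermitian → (L X).IsHermitian →
      traceNorm (L X) ≤ C * traceNorm X := by
  classical
  set c : Fin d → Fin d → ℝ := fun a b => ∑ k, ∑ l,
    ‖(L (Matrix.single k l 1)) a b‖ with hc
  refine ⟨(d : ℝ) * ∑ a, ∑ b, c a b, ?_, ?_⟩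
  · exact mul_nonneg (Nat.cast_nonneg _) (Finset.sum_nonneg fun a _ =>
      Finset.sum_nonneg fun b _ => Finset.sum_nonneg fun k _ =>
        Finset.sum_nonneg fun l _ => norm_nonneg _)
  intro X hX hLX
  have hXd : L X = ∑ k, ∑ l, X k l • L (Matrix.single k l 1) := by
    conv_lhs => rw [matrix_eq_sum_single X]
    rw [map_sum]
    refine Finset.sum_congr rfl fun k _ => ?_
    rw [map_sum]
    refine Finset.sum_congr rfl fun l _ => ?_
    rw [show Matrix.single k l (X k l) = X k l • Matrix.single k l 1 by
      rw [smul_single, smul_eq_mul, mul_one], LinearMap.map_smul]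
  have hentry : ∀ a b, ‖(L X) a b‖
      ≤ ∑ k, ∑ l, ‖X k l‖ * ‖(L (Matrix.single k l 1)) a b‖ := by
    intro a b
    have h1 : (L X) a b = ∑ k, ∑ l, X k l * (L (Matrix.single k l 1)) a b := by
      rw [hXd]
      simp [Matrix.sum_apply]
    rw [h1]
    calc ‖∑ k, ∑ l, X k l * (L (Matrix.single k l 1)) a b‖
        ≤ ∑ k, ‖∑ l, X k l * (L (Matrix.single k l 1)) a b‖ :=
          norm_sum_le _ _
      _ ≤ ∑ k, ∑ l, ‖X k l * (L (Matrix.single k l 1)) a b‖ :=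
          Finset.sum_le_sum fun k _ => norm_sum_le _ _
      _ = ∑ k, ∑ l, ‖X k l‖ * ‖(L (Matrix.single k l 1)) a b‖ := by
          refine Finset.sum_congr rfl fun k _ => Finset.sum_congr rfl fun l _ => ?_
          exact norm_mul _ _
  calc traceNorm (L X) ≤ (d : ℝ) * ∑ a, ∑ b, ‖(L X) a b‖ :=
        traceNorm_le_card_mul_entries hLX
    _ ≤ (d : ℝ) * ∑ a, ∑ b, ∑ k, ∑ l,
          ‖X k l‖ * ‖(L (Matrix.single k l 1)) a b‖ := by
        refine mul_le_mul_of_nonneg_left ?_ (Nat.cast_nonneg _)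
        exact Finset.sum_le_sum fun a _ => Finset.sum_le_sum fun b _ => hentry a b
    _ ≤ (d : ℝ) * ∑ a, ∑ b, ∑ k, ∑ l,
          traceNorm X * ‖(L (Matrix.single k l 1)) a b‖ := by
        refine mul_le_mul_of_nonneg_left ?_ (Nat.cast_nonneg _)
        refine Finset.sum_le_sum fun a _ => Finset.sum_le_sum fun b _ =>
          Finset.sum_le_sum fun k _ => Finset.sum_le_sum fun l _ => ?_
        exact mul_le_mul_of_nonneg_right (abs_entry_le_traceNorm hX k l)
          (norm_nonneg _)
    _ = ((d : ℝ) * ∑ a, ∑ b, c a b) * traceNorm X := by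
        simp only [hc, Finset.mul_sum, Finset.sum_mul]
        refine Finset.sum_congr rfl fun a _ => Finset.sum_congr rfl fun b _ =>
          Finset.sum_congr rfl fun k _ => Finset.sum_congr rfl fun l _ => ?_
        ring

lemma col_unit {U : Matrix (Fin d) (Fin d) ℂ} (hU1 : Uᴴ * U = 1) (i : Fin d) :
    ∑ k, star (U k i) * U k i = 1 := by
  have h := congrArg (fun N => N i i) hU1
  simpa [mul_apply, conjTranspose_apply] using h

lemma col_orth {U : Matrix (Fin d) (Fin d) ℂ} (hU1 : Uᴴ * U = 1) {i j : Fin d} (hij : i ≠ j) :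
    ∑ k, star (U k i) * U k j = 0 := by
  have h := congrArg (fun N => N i j) hU1
  simpa [mul_apply, conjTranspose_apply, Matrix.one_apply_ne hij] using h

lemma core_bound (L : MatEnd d) (hLherm : ∀ X : Matrix (Fin d) (Fin d) ℂ,
      X.IsHermitian → (L X).IsHermitian)
    {σ : Matrix (Fin d) (Fin d) ℂ} (hσ : σ.IsHermitian) (htr0 : σ.trace = 0) (hne : σ ≠ 0)
    (S : Set ℝ)
    (hS : S = {r | ∃ φ ψ : Fin d → ℂ,
      (∑ i, star (φ i) * φ i) = 1 ∧ (∑ i, star (ψ i) * ψ i) = 1 ∧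
      (∑ i, star (φ i) * ψ i) = 0 ∧
      r = traceNorm (L (Matrix.vecMulVec φ (star φ)) - L (Matrix.vecMulVec ψ (star ψ)))})
    (hSbdd : BddAbove S) :
    traceNorm (L σ) / traceNorm σ ≤ sSup S / 2 ∧ S.Nonempty := by
  classical
  set U := (hσ.eigenvectorUnitary : Matrix (Fin d) (Fin d) ℂ) with hU
  have hU1 : Uᴴ * U = 1 := unitary_conjT_mul _
  set lam := hσ.eigenvalues with hlam
  set col : Fin d → (Fin d → ℂ) := fun i => fun a => U a i with hcol
  set E : Fin d → Matrix (Fin d) (Fin d) ℂ := fun i => vecMulVec (col i) (star (col i)) with hE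
  have hdec : σ = ∑ i, (lam i : ℂ) • E i := spectral_decomp hσ
  have hcolunit : ∀ i, ∑ k, star (col i k) * col i k = 1 := fun i => col_unit hU1 i
  have hcolorth : ∀ i j, i ≠ j → ∑ k, star (col i k) * col j k = 0 :=
    fun i j hij => col_orth hU1 hij
  have hsumlam : ∑ i, lam i = 0 := by
    have h1 : σ.trace = ((∑ i, lam i : ℝ) : ℂ) := by
      conv_lhs => rw [hdec]
      rw [trace_sum, Complex.ofReal_sum]
      refine Finset.sum_congr rfl fun i _ => ?_
      rw [trace_smul, hE]
      rw [vecMulVec_trace, hcolunit i, smul_eq_mul, mul_one]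
    rw [htr0] at h1
    exact_mod_cast h1.symm
  set Pf := Finset.univ.filter (fun i => 0 < lam i) with hPf
  set Nf := Finset.univ.filter (fun i => lam i < 0) with hNf
  set t := ∑ i ∈ Pf, lam i with ht
  have hNsub : Nf ⊆ Finset.univ.filter (fun i => ¬ 0 < lam i) := by
    intro x hx
    rw [Finset.mem_filter] at hx ⊢
    exact ⟨hx.1, not_lt.mpr (le_of_lt hx.2)⟩
  have hzero : ∀ x ∈ Finset.univ.filter (fun i => ¬ 0 < lam i), x ∉ Nf → lam x = 0 := by
    intro x hx hnx
    rw [Finset.mem_filter] at hx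
    rw [hNf, Finset.mem_filter] at hnx
    push_neg at hnx
    exact le_antisymm (not_lt.mp hx.2) (hnx (Finset.mem_univ x))
  have hNt : ∑ j ∈ Nf, (-lam j) = t := by
    have h1 : ∑ i ∈ Pf, lam i + ∑ i ∈ Finset.univ.filter (fun i => ¬ 0 < lam i), lam i = 0 := by
      rw [Finset.sum_filter_add_sum_filter_not]
      exact hsumlam
    have h2 : ∑ i ∈ Nf, lam i = ∑ i ∈ Finset.univ.filter (fun i => ¬ 0 < lam i), lam i :=
      Finset.sum_subset hNsub hzero
    rw [Finset.sum_neg_distrib]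
    rw [h2] at *
    linarith
  have htN : traceNorm σ = 2 * t := by
    rw [traceNorm_of_hermitian hσ]
    have h1 : ∑ i ∈ Pf, |lam i| + ∑ i ∈ Finset.univ.filter (fun i => ¬ 0 < lam i), |lam i|
        = ∑ i, |lam i| := Finset.sum_filter_add_sum_filter_not _ _ _
    have h2 : ∑ i ∈ Pf, |lam i| = t := by
      rw [ht]
      refine Finset.sum_congr rfl fun i hi => ?_
      exact abs_of_pos (Finset.mem_filter.mp hi).2
    have h3 : ∑ i ∈ Finset.univ.filter (fun i => ¬ 0 < lam i), |lam i|
        = ∑ i ∈ Nf, (-lam i) := by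
      rw [← Finset.sum_subset hNsub (fun x hx hnx => by rw [hzero x hx hnx, abs_zero])]
      refine Finset.sum_congr rfl fun i hi => ?_
      exact abs_of_neg (Finset.mem_filter.mp hi).2
    rw [← h1, h2, h3, hNt]
    ring
  have ht0 : 0 < t := by
    have h2 := traceNorm_pos hσ hne
    rw [htN] at h2
    linarith
  have hmem : ∀ i ∈ Pf, ∀ j ∈ Nf, traceNorm (L (E i - E j)) ∈ S := by
    intro i hi j hj
    have hij : i ≠ j := by
      intro h
      have h1 := (Finset.mem_filter.mp hi).2
      have h2 := (Finset.mem_filter.mp hj).2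
      rw [h] at h1
      linarith
    rw [hS]
    exact ⟨col i, col j, hcolunit i, hcolunit j, hcolorth i j hij, by rw [map_sub]⟩
  -- nonemptiness of S
  have hex : ∃ i, lam i ≠ 0 := by
    by_contra h
    push_neg at h
    apply hne
    rw [hdec]
    refine Finset.sum_eq_zero fun i _ => ?_
    rw [h i]
    simp
  have hPne : Pf.Nonempty := by
    by_contra hno
    rw [Finset.not_nonempty_iff_eq_empty] at hno
    have hnonpos : ∀ i, lam i ≤ 0 := by
      intro i
      by_contra hpos
      have : i ∈ Pf := Finset.mem_filter.mpr ⟨Finset.mem_univ i, not_le.mp hpos⟩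
      rw [hno] at this
      exact absurd this (Finset.notMem_empty i)
    have hall : ∀ i ∈ Finset.univ, lam i = 0 :=
      (Finset.sum_eq_zero_iff_of_nonpos (fun i _ => hnonpos i)).mp hsumlam
    obtain ⟨i, hi⟩ := hex
    exact hi (hall i (Finset.mem_univ i))
  have hNne : Nf.Nonempty := by
    by_contra hno
    rw [Finset.not_nonempty_iff_eq_empty] at hno
    have hnonneg : ∀ i, 0 ≤ lam i := by
      intro i
      by_contra hneg
      have : i ∈ Nf := Finset.mem_filter.mpr ⟨Finset.mem_univ i, not_le.mp hneg⟩
      rw [hno] at this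
      exact absurd this (Finset.notMem_empty i)
    have hall : ∀ i ∈ Finset.univ, lam i = 0 :=
      (Finset.sum_eq_zero_iff_of_nonneg (fun i _ => hnonneg i)).mp hsumlam
    obtain ⟨i, hi⟩ := hex
    exact hi (hall i (Finset.mem_univ i))
  obtain ⟨i0, hi0⟩ := hPne
  obtain ⟨j0, hj0⟩ := hNne
  have hSne : S.Nonempty := ⟨_, hmem i0 hi0 j0 hj0⟩
  refine ⟨?_, hSne⟩
  -- coefficients
  set co : Fin d → Fin d → ℝ := fun i j => lam i * (-lam j) / t with hco
  have hco0 : ∀ i ∈ Pf, ∀ j ∈ Nf, 0 ≤ co i j := by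
    intro i hi j hj
    have h1 := (Finset.mem_filter.mp hi).2
    have h2 := (Finset.mem_filter.mp hj).2
    rw [hco]
    have : (0:ℝ) < lam i * (-lam j) := mul_pos h1 (by linarith)
    positivity
  have e1r : ∀ i ∈ Pf, ∑ j ∈ Nf, co i j = lam i := by
    intro i hi
    rw [hco]
    have : ∀ j ∈ Nf, lam i * (-lam j) / t = (lam i / t) * (-lam j) := fun j _ => by ring
    rw [Finset.sum_congr rfl this, ← Finset.mul_sum, hNt]
    field_simp
  have e2r : ∀ j ∈ Nf, ∑ i ∈ Pf, co i j = -lam j := by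
    intro j hj
    rw [hco]
    have : ∀ i ∈ Pf, lam i * (-lam j) / t = (-lam j / t) * lam i := fun i _ => by ring
    rw [Finset.sum_congr rfl this, ← Finset.mul_sum, ← ht]
    field_simp
  -- decomposition of σ
  have hσdec : σ = ∑ p ∈ Pf ×ˢ Nf, ((co p.1 p.2 : ℝ) : ℂ) • (E p.1 - E p.2) := by
    rw [Finset.sum_product]
    have step1 : ∀ i ∈ Pf, ∑ j ∈ Nf, ((co i j : ℝ) : ℂ) • (E i - E j)
        = (lam i : ℂ) • E i - ∑ j ∈ Nf, ((co i j : ℝ) : ℂ) • E j := by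
      intro i hi
      rw [show (∑ j ∈ Nf, ((co i j : ℝ) : ℂ) • (E i - E j))
          = (∑ j ∈ Nf, ((co i j : ℝ) : ℂ) • E i) - ∑ j ∈ Nf, ((co i j : ℝ) : ℂ) • E j by
        rw [← Finset.sum_sub_distrib]
        exact Finset.sum_congr rfl fun j _ => smul_sub _ _ _]
      congr 1
      rw [← Finset.sum_smul, ← Complex.ofReal_sum, e1r i hi]
    rw [Finset.sum_congr rfl step1, Finset.sum_sub_distrib]
    have step2 : ∑ i ∈ Pf, ∑ j ∈ Nf, ((co i j : ℝ) : ℂ) • E j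
        = ∑ j ∈ Nf, ((-lam j : ℝ) : ℂ) • E j := by
      rw [Finset.sum_comm]
      refine Finset.sum_congr rfl fun j hj => ?_
      rw [← Finset.sum_smul, ← Complex.ofReal_sum, e2r j hj]
    rw [step2]
    have step3 : ∑ i ∈ Pf, (lam i : ℂ) • E i - ∑ j ∈ Nf, ((-lam j : ℝ) : ℂ) • E j
        = ∑ i ∈ Pf, (lam i : ℂ) • E i + ∑ j ∈ Nf, (lam j : ℂ) • E j := by
      rw [sub_eq_add_neg, ← Finset.sum_neg_distrib]
      congr 1
      refine Finset.sum_congr rfl fun j _ => ?_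
      rw [← neg_smul]
      congr 1
      push_cast
      ring
    rw [step3]
    have step4 : ∑ j ∈ Nf, (lam j : ℂ) • E j
        = ∑ j ∈ Finset.univ.filter (fun i => ¬ 0 < lam i), (lam j : ℂ) • E j := by
      refine Finset.sum_subset hNsub fun x hx hnx => ?_
      rw [hzero x hx hnx]
      simp
    rw [step4, Finset.sum_filter_add_sum_filter_not]
    exact hdec
  -- the bound
  have hLdec : L σ = ∑ p ∈ Pf ×ˢ Nf, ((co p.1 p.2 : ℝ) : ℂ) • L (E p.1 - E p.2) := by
    conv_lhs => rw [hσdec]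
    rw [map_sum]
    exact Finset.sum_congr rfl fun p _ => LinearMap.map_smul _ _ _
  have hEherm : ∀ p : Fin d × Fin d, (E p.1 - E p.2).IsHermitian :=
    fun p => (vecMulVec_isHermitian _).sub (vecMulVec_isHermitian _)
  have hb1 : traceNorm (L σ) ≤ ∑ p ∈ Pf ×ˢ Nf, co p.1 p.2 * sSup S := by
    rw [hLdec]
    calc traceNorm (∑ p ∈ Pf ×ˢ Nf, ((co p.1 p.2 : ℝ) : ℂ) • L (E p.1 - E p.2))
        ≤ ∑ p ∈ Pf ×ˢ Nf, traceNorm (((co p.1 p.2 : ℝ) : ℂ) • L (E p.1 - E p.2)) :=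
          traceNorm_sum_le _ _ fun p _ =>
            isHermitian_smul_real (hLherm _ (hEherm p)) _
      _ = ∑ p ∈ Pf ×ˢ Nf, |co p.1 p.2| * traceNorm (L (E p.1 - E p.2)) :=
          Finset.sum_congr rfl fun p _ => traceNorm_smul_real _ _
      _ ≤ ∑ p ∈ Pf ×ˢ Nf, co p.1 p.2 * sSup S := by
          refine Finset.sum_le_sum fun p hp => ?_
          obtain ⟨hp1, hp2⟩ := Finset.mem_product.mp hp
          rw [abs_of_nonneg (hco0 _ hp1 _ hp2)]
          exact mul_le_mul_of_nonneg_left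
            (le_csSup hSbdd (hmem _ hp1 _ hp2)) (hco0 _ hp1 _ hp2)
  have hsumco : ∑ p ∈ Pf ×ˢ Nf, co p.1 p.2 = t := by
    rw [Finset.sum_product, Finset.sum_congr rfl e1r, ht]
  have hb2 : traceNorm (L σ) ≤ t * sSup S := by
    rw [← Finset.sum_mul] at hb1
    rwa [hsumco] at hb1
  rw [htN, div_le_div_iff₀ (by linarith) (by norm_num)]
  nlinarith [hb2]


/-- the contraction coefficient equals half the supremum of
`‖L(|φ⟩⟨φ|) − L(|ψ⟩⟨ψ|)‖₁` over pairs of orthonormal vectors. -/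
theorem tau_eq_sup_orthonormal {d : ℕ} (L : MatEnd d) (hHP : IsHP L) (hTP : IsTP L) :
    tau L = (1 / 2) * sSup {r | ∃ φ ψ : Fin d → ℂ,
      (∑ i, star (φ i) * φ i) = 1 ∧ (∑ i, star (ψ i) * ψ i) = 1 ∧
      (∑ i, star (φ i) * ψ i) = 0 ∧
      r = traceNorm (L (Matrix.vecMulVec φ (star φ)) - L (Matrix.vecMulVec ψ (star ψ)))} := by
  classical
  set S := {r | ∃ φ ψ : Fin d → ℂ,
      (∑ i, star (φ i) * φ i) = 1 ∧ (∑ i, star (ψ i) * ψ i) = 1 ∧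
      (∑ i, star (φ i) * ψ i) = 0 ∧
      r = traceNorm (L (Matrix.vecMulVec φ (star φ)) - L (Matrix.vecMulVec ψ (star ψ)))}
    with hSdef
  set T := {r | ∃ σ : Matrix (Fin d) (Fin d) ℂ,
      σ.IsHermitian ∧ σ.trace = 0 ∧ σ ≠ 0 ∧ r = traceNorm (L σ) / traceNorm σ} with hTdef
  have htau : tau L = sSup T := rfl
  have hLherm : ∀ X : Matrix (Fin d) (Fin d) ℂ, X.IsHermitian → (L X).IsHermitian := by
    intro X hX
    show (L X)ᴴ = L X
    rw [hHP X, hX]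
  obtain ⟨C, hC0, hCb⟩ := exists_L_bound L
  have hTub : ∀ r ∈ T, r ≤ C := by
    rintro r ⟨σ, hσ, htr0, hne, hr⟩
    rw [hr, div_le_iff₀ (traceNorm_pos hσ hne)]
    exact hCb σ hσ (hLherm σ hσ)
  have hTbdd : BddAbove T := ⟨C, hTub⟩
  have hSub : ∀ r ∈ S, r ≤ C * 2 := by
    rintro r ⟨φ, ψ, hφ, hψ, ho, hr⟩
    have hherm : (vecMulVec φ (star φ) - vecMulVec ψ (star ψ)).IsHermitian :=
      (vecMulVec_isHermitian φ).sub (vecMulVec_isHermitian ψ)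
    rw [hr, ← map_sub]
    calc traceNorm (L (vecMulVec φ (star φ) - vecMulVec ψ (star ψ)))
        ≤ C * traceNorm (vecMulVec φ (star φ) - vecMulVec ψ (star ψ)) :=
          hCb _ hherm (hLherm _ hherm)
      _ = C * 2 := by rw [traceNorm_proj_sub hφ hψ ho]
  have hSbdd : BddAbove S := ⟨C * 2, hSub⟩
  have hpair_mem : ∀ r ∈ S, r / 2 ∈ T := by
    rintro r ⟨φ, ψ, hφ, hψ, ho, hr⟩
    have hherm : (vecMulVec φ (star φ) - vecMulVec ψ (star ψ)).IsHermitian :=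
      (vecMulVec_isHermitian φ).sub (vecMulVec_isHermitian ψ)
    have htn2 : traceNorm (vecMulVec φ (star φ) - vecMulVec ψ (star ψ)) = 2 :=
      traceNorm_proj_sub hφ hψ ho
    refine ⟨vecMulVec φ (star φ) - vecMulVec ψ (star ψ), hherm, ?_, ?_, ?_⟩
    · rw [trace_sub, vecMulVec_trace, vecMulVec_trace, hφ, hψ, sub_self]
    · intro h0
      rw [h0, traceNorm_zero] at htn2
      norm_num at htn2
    · rw [hr, ← map_sub, htn2]
  rcases Set.eq_empty_or_nonempty T with hT | hT
  · have hSempty : S = ∅ := by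
      by_contra h
      obtain ⟨r, hrS⟩ := Set.nonempty_iff_ne_empty.mpr h
      have := hpair_mem r hrS
      rw [hT] at this
      exact this
    rw [htau, hT, hSempty, Real.sSup_empty]
    norm_num
  · have hSne : S.Nonempty := by
      obtain ⟨r0, σ, hσ, h0, hne, hre⟩ := hT
      exact (core_bound L hLherm hσ h0 hne S hSdef hSbdd).2
    have h1 : sSup T ≤ sSup S / 2 := by
      refine csSup_le hT ?_
      rintro r ⟨σ, hσ, h0, hne, hre⟩
      rw [hre]
      exact (core_bound L hLherm hσ h0 hne S hSdef hSbdd).1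
    have h2 : sSup S ≤ 2 * sSup T := by
      refine csSup_le hSne fun r hr => ?_
      have := le_csSup hTbdd (hpair_mem r hr)
      linarith
    rw [htau]
    linarith
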